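/- Let T be the 26-letter alphabet of capital letters and let φ: Σ_2* → T* be the monoid homomorphism determined by φ(a_1) = BEG, φ(b_1) = END, φ(a_2) = FOR, φ(b_2) = END, and let L = φ(D_2) ⊆ T*. Then for every ℓ ≥ 0, the set of words of length ℓ in L is finite, of cardinality 2^k · catalan(k) if ℓ = 6k for some k ≥ 0, and of cardinality 0 if ℓ is not a multiple of 6. (This expresses the paper's identity H_L(z) = H_{D_2}(z³) = (1−√(1−8z⁶))/(4z⁶) on the level of coefficients.) -/

import Mathlib

/-- The Dyck language over `n` kinds of parentheses. -/
inductive Dyck (n : ℕ) : List (Fin n × Bool) → Prop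
  | nil : Dyck n []
  | append {u v : List (Fin n × Bool)} : Dyck n u → Dyck n v → Dyck n (u ++ v)
  | wrap {w : List (Fin n × Bool)} (i : Fin n) :
      Dyck n w → Dyck n ((i, true) :: (w ++ [(i, false)]))

/-- The 26-letter alphabet of capital letters, `A = 0, B = 1, …, Z = 25`. -/
abbrev Capital : Type := Fin 26

/-- The word "BEG" over the capital-letter alphabet. -/
def BEG : List Capital := [1, 4, 6]

/-- The word "END" over the capital-letter alphabet. -/
def END : List Capital := [4, 13, 3]

/-- The word "FOR" over the capital-letter alphabet. -/
def FOR : List Capital := [5, 14, 17]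

/-- The letterwise description of `φ : Σ₂* → T*`:
`φ(a₁) = BEG`, `φ(b₁) = END`, `φ(a₂) = FOR`, `φ(b₂) = END`. -/
def phiLetter : Fin 2 × Bool → List Capital
  | (⟨0, _⟩, true) => BEG
  | (⟨0, _⟩, false) => END
  | (⟨1, _⟩, true) => FOR
  | (⟨1, _⟩, false) => END

/-- The extension of `φ` to a monoid homomorphism `Σ₂* → T*`. -/
def phi (u : List (Fin 2 × Bool)) : List Capital := (u.map phiLetter).flatten

/-- The language `L = φ(D₂) ⊆ T*`. -/
def L : Language Capital := {w | ∃ u, Dyck 2 u ∧ w = phi u}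

open List

variable {n : ℕ}

/-- number of openers -/
def ops (u : List (Fin n × Bool)) : ℕ := u.countP (fun x => x.2)
/-- number of closers -/
def cls (u : List (Fin n × Bool)) : ℕ := u.countP (fun x => !x.2)

lemma dyck_bal {u : List (Fin n × Bool)} (h : Dyck n u) : cls u = ops u := by
  induction h with
  | nil => rfl
  | append _ _ ih1 ih2 => simp [ops, cls, countP_append] at *; omega
  | wrap i _ ih => simp [ops, cls, countP_append, countP_cons] at *; omega

lemma dyck_prefix {u : List (Fin n × Bool)} (h : Dyck n u) :
    ∀ i, cls (u.take i) ≤ ops (u.take i) := by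
  induction h with
  | nil => simp [ops, cls]
  | @append u v _ _ ih1 ih2 =>
      intro i
      rw [take_append]
      simp only [ops, cls, countP_append]
      exact Nat.add_le_add (ih1 i) (ih2 _)
  | @wrap w i hw ih =>
      intro j
      cases j with
      | zero => simp [ops, cls]
      | succ m =>
          rw [take_succ_cons, take_append]
          have h1 := ih m
          have h2 : cls (([((i:Fin n), false)] : List (Fin n × Bool)).take (m - w.length)) ≤ 1 := by
            cases (m - w.length) with
            | zero => simp [cls]
            | succ t => simp [cls, countP_cons]
          simp only [ops, cls, countP_append, countP_cons] at *
          simp only [Bool.not_true, Bool.not_false, Bool.false_eq_true, if_true, if_false] at *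
          omega

lemma dyck_even {u : List (Fin n × Bool)} (h : Dyck n u) : u.length = 2 * ops u := by
  have := dyck_bal h
  have := u.length_eq_countP_add_countP (fun x => x.2)
  simp only [ops, cls] at *
  rw [this]
  have : countP (fun x => !x.2) u = countP (fun x => ¬ x.2 = true) u := by
    apply countP_congr; intro x _; simp
  omega

/-- First-return decomposition: existence. -/
lemma dyck_decomp {u : List (Fin n × Bool)} (h : Dyck n u) :
    u = [] ∨ ∃ c w v, Dyck n w ∧ Dyck n v ∧ u = (c, true) :: (w ++ (c, false) :: v) := by
  induction h with
  | nil => left; rfl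
  | @append u v hu hv ih1 ih2 =>
      rcases ih1 with rfl | ⟨c, w, v1, hw, hv1, rfl⟩
      · simpa using ih2
      · right
        exact ⟨c, w, v1 ++ v, hw, Dyck.append hv1 hv, by simp⟩
  | @wrap w i hw ih =>
      right
      exact ⟨i, w, [], hw, Dyck.nil, by simp⟩

/-- Uniqueness of the split point. -/
lemma split_len_unique {w w' v v' : List (Fin n × Bool)} {c c' : Fin n}
    (hw : Dyck n w) (hw' : Dyck n w')
    (h : w ++ (c, false) :: v = w' ++ (c', false) :: v') : w.length = w'.length := by
  have key : ∀ (w w' v v' : List (Fin n × Bool)) (c c' : Fin n), Dyck n w → Dyck n w' →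
      w ++ (c, false) :: v = w' ++ (c', false) :: v' → ¬ (w.length < w'.length) := by
    intro w w' v v' c c' hw hw' h hlt
    have htake := congrArg (fun l => List.take (w.length + 1) l) h
    simp only [take_append] at htake
    rw [take_of_length_le (by omega), Nat.add_sub_cancel_left] at htake
    have h2 : take (w.length + 1 - w'.length) ((c', false) :: v') = [] := by
      rw [take_eq_nil_iff]; left; omega
    rw [h2, append_nil] at htake
    have hc : cls (take (w.length + 1) w') ≤ ops (take (w.length + 1) w') := dyck_prefix hw' _
    rw [← htake] at hc
    have h3 : take 1 ((c, false) :: v) = [(c, false)] := rfl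
    rw [h3] at hc
    have hb := dyck_bal hw
    simp only [ops, cls, countP_append, countP_cons, countP_nil] at hc hb
    simp only [Bool.false_eq_true, if_true, if_false, Bool.not_false, Bool.not_true] at hc
    omega
  rcases Nat.lt_trichotomy w.length w'.length with hlt | he | hgt
  · exact absurd hlt (key w w' v v' c c' hw hw' h)
  · exact he
  · exact absurd hgt (key w' w v' v c' c hw' hw h.symm)

lemma decomp_unique {w w' v v' : List (Fin n × Bool)} {c c' : Fin n}
    (hw : Dyck n w) (hw' : Dyck n w')
    (h : ((c, true) :: (w ++ (c, false) :: v) : List (Fin n × Bool))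
       = (c', true) :: (w' ++ (c', false) :: v')) :
    c = c' ∧ w = w' ∧ v = v' := by
  rw [cons.injEq] at h
  obtain ⟨hc, ht⟩ := h
  have hc' : c = c' := by simpa using hc
  subst hc'
  have hlen := split_len_unique hw hw' ht
  obtain ⟨h1, h2⟩ := append_inj ht hlen
  exact ⟨rfl, h1, by simpa using h2⟩

def S (n k : ℕ) : Set (List (Fin n × Bool)) := {u | Dyck n u ∧ u.length = 2 * k}

lemma S_finite (n k : ℕ) : (S n k).Finite :=
  (List.finite_length_eq _ (2 * k)).subset (fun _ hu => hu.2)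

lemma card_S_zero (n : ℕ) : Nat.card (S n 0) = 1 := by
  have : S n 0 = {[]} := by
    ext u
    simp only [S, Set.mem_setOf_eq, Set.mem_singleton_iff, Nat.mul_zero, List.length_eq_zero_iff]
    constructor
    · exact fun h => h.2
    · rintro rfl; exact ⟨Dyck.nil, rfl⟩
  rw [this, Nat.card_coe_set_eq, Set.ncard_singleton]

lemma card_S_succ (n k : ℕ) :
    Nat.card (S n (k + 1))
      = n * ∑ i : Fin (k + 1), Nat.card (S n i) * Nat.card (S n (k - i)) := by
  classical
  set g : Fin n × (Σ i : Fin (k + 1), S n i × S n (k - (i : ℕ))) → S n (k + 1) :=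
    fun x => ⟨(x.1, true) :: ((x.2.2.1 : List (Fin n × Bool)) ++ (x.1, false) :: (x.2.2.2 : List (Fin n × Bool))), by
      constructor
      · have he : ((x.1, true) :: ((x.2.2.1 : List (Fin n × Bool)) ++ (x.1, false) :: (x.2.2.2 : List (Fin n × Bool))))
            = ((x.1, true) :: ((x.2.2.1 : List (Fin n × Bool)) ++ [(x.1, false)])) ++ (x.2.2.2 : List (Fin n × Bool)) := by
          simp
        rw [he]
        exact Dyck.append (Dyck.wrap x.1 x.2.2.1.2.1) x.2.2.2.2.1
      · have h1 := x.2.2.1.2.2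
        have h2 := x.2.2.2.2.2
        have h3 : (x.2.1 : ℕ) ≤ k := Nat.lt_succ_iff.mp x.2.1.isLt
        simp only [List.length_cons, List.length_append]
        omega⟩ with hg
  have hginj : Function.Injective g := by
    rintro ⟨c, ⟨i, ⟨w, hw⟩, ⟨v, hv⟩⟩⟩ ⟨c', ⟨i', ⟨w', hw'⟩, ⟨v', hv'⟩⟩⟩ h
    have h' : ((c, true) :: (w ++ (c, false) :: v) : List (Fin n × Bool))
        = (c', true) :: (w' ++ (c', false) :: v') := congrArg Subtype.val h
    obtain ⟨hc, hweq, hveq⟩ := decomp_unique hw.1 hw'.1 h'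
    subst hc; subst hweq; subst hveq
    have hi : i = i' := by
      have h1 := hw.2; have h2 := hw'.2
      apply Fin.ext; omega
    subst hi
    rfl
  have hgsurj : Function.Surjective g := by
    rintro ⟨u, hu, hl⟩
    rcases dyck_decomp hu with rfl | ⟨c, w, v, hw, hv, rfl⟩
    · simp at hl
    · have hwl := dyck_even hw
      have hvl := dyck_even hv
      simp only [List.length_cons, List.length_append] at hl
      have hik : ops w ≤ k := by omega
      refine ⟨⟨c, ⟨⟨ops w, Nat.lt_succ_of_le hik⟩, ⟨w, hw, hwl⟩, ⟨v, hv, by simp only [Fin.val_mk]; omega⟩⟩⟩, ?_⟩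
      apply Subtype.ext
      rfl
  have hcard := Nat.card_congr (Equiv.ofBijective g ⟨hginj, hgsurj⟩)
  rw [← hcard, Nat.card_prod]
  congr 1
  · simp
  · haveI : ∀ j : ℕ, Fintype (S n j) := fun j => (S_finite n j).fintype
    rw [Nat.card_eq_fintype_card, Fintype.card_sigma]
    simp only [Fintype.card_prod, Nat.card_eq_fintype_card]

lemma card_S_two (k : ℕ) : Nat.card (S 2 k) = 2 ^ k * catalan k := by
  induction k using Nat.strong_induction_on with
  | _ k ih =>
    match k with
    | 0 => simpa using card_S_zero 2
    | k + 1 =>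
      rw [card_S_succ, catalan_succ]
      have hterm : ∀ i : Fin (k + 1),
          Nat.card (S 2 i) * Nat.card (S 2 (k - (i : ℕ)))
            = 2 ^ k * (catalan i * catalan (k - (i : ℕ))) := by
        intro i
        rw [ih i (by omega), ih (k - (i : ℕ)) (by omega)]
        have hik : (i : ℕ) ≤ k := Nat.lt_succ_iff.mp i.isLt
        have : (2:ℕ) ^ (i : ℕ) * 2 ^ (k - (i : ℕ)) = 2 ^ k := by
          rw [← pow_add]; congr 1; omega
        calc 2 ^ (i:ℕ) * catalan i * (2 ^ (k - (i:ℕ)) * catalan (k - (i:ℕ)))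
            = (2 ^ (i:ℕ) * 2 ^ (k - (i:ℕ))) * (catalan i * catalan (k - (i:ℕ))) := by ring
          _ = 2 ^ k * (catalan i * catalan (k - (i:ℕ))) := by rw [this]
      rw [Finset.sum_congr rfl (fun i _ => hterm i), ← Finset.mul_sum]
      ring

lemma split_len_unique' {w w' v v' : List (Fin n × Bool)} {c c' : Fin n}
    (hb : cls w = ops w) (hb' : cls w' = ops w')
    (hp : ∀ i, cls (w.take i) ≤ ops (w.take i)) (hp' : ∀ i, cls (w'.take i) ≤ ops (w'.take i))
    (h : w ++ (c, false) :: v = w' ++ (c', false) :: v') : w.length = w'.length := by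
  have key : ∀ (w w' v v' : List (Fin n × Bool)) (c c' : Fin n),
      cls w = ops w → (∀ i, cls (w'.take i) ≤ ops (w'.take i)) →
      w ++ (c, false) :: v = w' ++ (c', false) :: v' → ¬ (w.length < w'.length) := by
    intro w w' v v' c c' hb hp' h hlt
    have htake := congrArg (fun l => List.take (w.length + 1) l) h
    simp only [take_append] at htake
    rw [take_of_length_le (by omega), Nat.add_sub_cancel_left] at htake
    have h2 : take (w.length + 1 - w'.length) ((c', false) :: v') = [] := by
      rw [take_eq_nil_iff]; left; omega
    rw [h2, append_nil] at htake
    have hc : cls (take (w.length + 1) w') ≤ ops (take (w.length + 1) w') := hp' _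
    rw [← htake] at hc
    have h3 : take 1 ((c, false) :: v) = [(c, false)] := rfl
    rw [h3] at hc
    simp only [ops, cls, countP_append, countP_cons, countP_nil] at hc hb
    simp only [Bool.false_eq_true, if_true, if_false, Bool.not_false, Bool.not_true] at hc hb
    omega
  rcases Nat.lt_trichotomy w.length w'.length with hlt | he | hgt
  · exact absurd hlt (key w w' v v' c c' hb hp' h)
  · exact he
  · exact absurd hgt (key w' w v' v c' c hb' hp h.symm)

/-- The recoloring map that forgets the colors of closing brackets. -/
def nrm : List (Fin 2 × Bool) → List (Fin 2 × Bool) :=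
  List.map (fun x => if x.2 then x else ((0 : Fin 2), false))

lemma nrm_snd (x : Fin 2 × Bool) :
    ((if x.2 then x else ((0 : Fin 2), false)) : Fin 2 × Bool).2 = x.2 := by
  cases hx : x.2 <;> simp [hx]

lemma ops_nrm (u : List (Fin 2 × Bool)) : ops (nrm u) = ops u := by
  rw [nrm, ops, countP_map, ops]
  apply countP_congr
  intro x _
  simp [Function.comp, nrm_snd]

lemma cls_nrm (u : List (Fin 2 × Bool)) : cls (nrm u) = cls u := by
  rw [nrm, cls, countP_map, cls]
  apply countP_congr
  intro x _
  simp [Function.comp, nrm_snd]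

lemma nrm_inj_aux (m : ℕ) : ∀ u u' : List (Fin 2 × Bool), u.length ≤ m →
    Dyck 2 u → Dyck 2 u' → nrm u = nrm u' → u = u' := by
  induction m with
  | zero =>
      intro u u' h _ _ he
      have hu : u = [] := by rw [← List.length_eq_zero_iff]; omega
      subst hu
      have : nrm u' = [] := he.symm
      rwa [nrm, map_eq_nil_iff, eq_comm] at this
  | succ m ih =>
      intro u u' hlen hu hu' he
      rcases dyck_decomp hu with rfl | ⟨c, w, v, hw, hv, rfl⟩
      · have : nrm u' = [] := he.symm
        rw [nrm, map_eq_nil_iff] at this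
        exact this.symm
      rcases dyck_decomp hu' with rfl | ⟨c', w', v', hw', hv', rfl⟩
      · exact absurd he (by simp [nrm])
      have e1 : nrm ((c, true) :: (w ++ (c, false) :: v))
          = (c, true) :: (nrm w ++ ((0 : Fin 2), false) :: nrm v) := by
        simp [nrm]
      have e2 : nrm ((c', true) :: (w' ++ (c', false) :: v'))
          = (c', true) :: (nrm w' ++ ((0 : Fin 2), false) :: nrm v') := by
        simp [nrm]
      rw [e1, e2, cons.injEq] at he
      obtain ⟨hc, ht⟩ := he
      have hc' : c = c' := by simpa using hc
      subst hc'
      have hwlen : (nrm w).length = (nrm w').length := by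
        refine split_len_unique' ?_ ?_ ?_ ?_ ht
        · rw [ops_nrm, cls_nrm]; exact dyck_bal hw
        · rw [ops_nrm, cls_nrm]; exact dyck_bal hw'
        · intro i; rw [nrm, ← map_take, ← nrm, ops_nrm, cls_nrm]; exact dyck_prefix hw i
        · intro i; rw [nrm, ← map_take, ← nrm, ops_nrm, cls_nrm]; exact dyck_prefix hw' i
      obtain ⟨hw1, hw2⟩ := append_inj ht hwlen
      have hw2' : nrm v = nrm v' := by simpa using hw2
      have hlw : w.length = (nrm w).length := by simp [nrm]
      have hlw' : w'.length = (nrm w').length := by simp [nrm]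
      simp only [List.length_cons, List.length_append] at hlen
      have hww : w = w' := ih w w' (by omega) hw hw' hw1
      have hvv : v = v' := ih v v' (by omega) hv hv' hw2'
      rw [hww, hvv]



/-- Decoding a word of `T*` back into `Σ₂*`, normalizing all closers to color `0`. -/
def decode : List Capital → List (Fin 2 × Bool)
  | a :: _ :: _ :: rest =>
      (if a = 1 then ((0 : Fin 2), true) else if a = 5 then ((1 : Fin 2), true)
        else ((0 : Fin 2), false)) :: decode rest
  | _ => []

lemma phiLetter_length (x : Fin 2 × Bool) : (phiLetter x).length = 3 := by
  obtain ⟨i, b⟩ := x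
  fin_cases i <;> cases b <;> rfl

lemma phi_length (u : List (Fin 2 × Bool)) : (phi u).length = 3 * u.length := by
  induction u with
  | nil => rfl
  | cons x u ih =>
      simp only [phi, List.map_cons, List.flatten_cons, List.length_append, List.length_cons] at *
      rw [phiLetter_length, ih]
      ring

lemma decode_phi (u : List (Fin 2 × Bool)) : decode (phi u) = nrm u := by
  induction u with
  | nil => rfl
  | cons x u ih =>
      obtain ⟨i, b⟩ := x
      have hp : phi (⟨i, b⟩ :: u) = phiLetter (i, b) ++ phi u := by
        simp [phi]
      rw [hp]
      fin_cases i <;> cases b <;>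
        simp [phiLetter, BEG, END, FOR, decode, nrm, ih] <;>
        rw [← nrm] <;> exact ih

lemma phi_inj {u u' : List (Fin 2 × Bool)} (hu : Dyck 2 u) (hu' : Dyck 2 u')
    (h : phi u = phi u') : u = u' := by
  have : nrm u = nrm u' := by rw [← decode_phi, ← decode_phi, h]
  exact nrm_inj_aux u.length u u' le_rfl hu hu' this

/-- For every `ℓ ≥ 0`, the set of words of length `ℓ` in `L = φ(D₂)` is finite,
of cardinality `2ᵏ · catalan k` if `ℓ = 6k`, and of cardinality `0` if `ℓ` is not
a multiple of `6`. -/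
theorem stmt_14 :
    ∀ ℓ : ℕ,
      {w : List Capital | w ∈ L ∧ w.length = ℓ}.Finite ∧
      Nat.card {w : List Capital | w ∈ L ∧ w.length = ℓ}
        = if 6 ∣ ℓ then 2 ^ (ℓ / 6) * catalan (ℓ / 6) else 0 := by
  intro ℓ
  constructor
  · exact (List.finite_length_eq Capital ℓ).subset (fun _ hw => hw.2)
  · by_cases h6 : 6 ∣ ℓ
    · obtain ⟨k, rfl⟩ := h6
      rw [if_pos ⟨k, rfl⟩, Nat.mul_div_cancel_left k (by norm_num)]
      set F : S 2 k → {w : List Capital | w ∈ L ∧ w.length = 6 * k} :=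
        fun u => ⟨phi u.1, ⟨u.1, u.2.1, rfl⟩, by
          rw [phi_length, u.2.2]; ring⟩ with hF
      have hFbij : Function.Bijective F := by
        constructor
        · rintro ⟨u, hu⟩ ⟨u', hu'⟩ h
          have : phi u = phi u' := congrArg Subtype.val h
          exact Subtype.ext (phi_inj hu.1 hu'.1 this)
        · rintro ⟨w, ⟨u, hu, rfl⟩, hlen⟩
          have h1 := phi_length u
          have h2 := dyck_even hu
          refine ⟨⟨u, hu, by omega⟩, rfl⟩
      rw [← Nat.card_congr (Equiv.ofBijective F hFbij), card_S_two]
    · rw [if_neg h6]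
      have hempty : {w : List Capital | w ∈ L ∧ w.length = ℓ} = ∅ := by
        ext w
        simp only [Set.mem_setOf_eq, Set.mem_empty_iff_false, iff_false, not_and]
        rintro ⟨u, hu, rfl⟩ hlen
        apply h6
        rw [← hlen, phi_length, dyck_even hu]
        exact ⟨ops u, by ring⟩
      rw [hempty]
      simp
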